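/- For n ∈ ℕ, λ ∈ ℝ and k ∈ ℤ let w_{n,λ}(k) := (2π/n) ∑_{s=1}^{n−1} 1{2πs/n ≤ λ} e^{-2πiks/n} ∈ ℂ. There exists a constant K < ∞ such that for every integer n ≥ 2 and every λ ∈ [0, π], ∑_{k=−(n−1)}^{n−1} |w_{n,λ}(k)| ≤ K · log n. -/

import Mathlib

open Real

/-- The lag-window weight `w_{n,λ}(k) = (2π/n) ∑_{s=1}^{n-1} 1{2πs/n ≤ λ} e^{-2πiks/n}`. -/
noncomputable def lagWeight (n : ℕ) (lam : ℝ) (k : ℤ) : ℂ :=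
  (2 * π / n) * ∑ s ∈ Finset.Icc 1 (n - 1),
    (if 2 * π * s / n ≤ lam then
      Complex.exp (-2 * π * Complex.I * ((k : ℤ) : ℂ) * (s : ℂ) / (n : ℂ)) else 0)

set_option maxHeartbeats 1000000 in
lemma lagWeight_bound {n k : ℕ} (hn : 2 ≤ n) (hk1 : 1 ≤ k) (hk2 : k ≤ n - 1)
    {lam : ℝ} (hlam0 : 0 ≤ lam) :
    ‖lagWeight n lam (k : ℤ)‖ ≤ π * (1 / (k : ℝ) + 1 / ((n : ℝ) - k)) := by
  have hn0 : (0 : ℝ) < n := by positivity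
  have hkn : k < n := by omega
  have hk0 : (0 : ℝ) < k := by exact_mod_cast hk1
  have hknR : (k : ℝ) < n := by exact_mod_cast hkn
  have hπ : (0 : ℝ) < π := Real.pi_pos
  set θ : ℝ := -(2 * π * k / n) with hθ
  set z : ℂ := Complex.exp ((θ : ℂ) * Complex.I) with hzdef
  set M : ℕ := min (n - 1) (Nat.floor (lam * n / (2 * π))) with hM
  -- rewrite the sum
  have hterm : ∀ s : ℕ,
      Complex.exp (-2 * π * Complex.I * ((k : ℤ) : ℂ) * (s : ℂ) / (n : ℂ)) = z ^ s := by
    intro s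
    rw [hzdef, ← Complex.exp_nat_mul]
    congr 1
    rw [hθ]
    push_cast
    ring
  have hfil : (Finset.Icc 1 (n - 1)).filter (fun s : ℕ => 2 * π * s / n ≤ lam)
      = Finset.Icc 1 M := by
    ext s
    have hcond : (2 * π * (s : ℝ) / n ≤ lam) ↔ s ≤ Nat.floor (lam * n / (2 * π)) := by
      rw [Nat.le_floor_iff (by positivity)]
      rw [div_le_iff₀ hn0, le_div_iff₀ (by positivity : (0:ℝ) < 2 * π)]
      constructor <;> intro h <;> nlinarith
    simp only [Finset.mem_filter, Finset.mem_Icc, hM, le_min_iff]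
    tauto
  have hz1 : z ≠ 1 := by
    intro h
    rw [hzdef, Complex.exp_eq_one_iff] at h
    obtain ⟨m, hm⟩ := h
    have hm' : (θ : ℂ) * Complex.I = ((m : ℂ) * (2 * π)) * Complex.I := by
      rw [hm]; push_cast; ring
    have hθm : (θ : ℂ) = (m : ℂ) * (2 * π) := mul_right_cancel₀ Complex.I_ne_zero hm'
    have hθm' : θ = (m : ℝ) * (2 * π) := by exact_mod_cast hθm
    have h4 : (2 * π) * (-(k : ℝ) / n) = (2 * π) * m := by
      rw [← mul_comm (m : ℝ) (2 * π), ← hθm', hθ]; ring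
    have h5 : -(k : ℝ) / n = m := mul_left_cancel₀ (by positivity : (0:ℝ) < 2 * π).ne' h4
    have hk : (k : ℝ) = (-m) * n := by
      field_simp at h5
      linarith
    have hkZ : (k : ℤ) = (-m) * n := by exact_mod_cast hk
    have hdvd : (n : ℤ) ∣ (k : ℤ) := ⟨-m, by rw [hkZ]; ring⟩
    have := Int.le_of_dvd (by exact_mod_cast hk1) hdvd
    omega
  have hz0 : z - 1 ≠ 0 := sub_ne_zero.mpr hz1
  have hznorm : ‖z‖ = 1 := by
    rw [hzdef]; exact Complex.norm_exp_ofReal_mul_I θ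
  -- geometric sum
  have hsum : ∑ s ∈ Finset.Icc 1 M, z ^ s = (z ^ (M + 1) - z) / (z - 1) := by
    have h0 : Finset.range (M + 1) = insert 0 (Finset.Icc 1 M) := by
      ext s; simp [Nat.lt_succ_iff]; omega
    have h1 : ∑ s ∈ Finset.range (M + 1), z ^ s = (z ^ (M + 1) - 1) / (z - 1) :=
      geom_sum_eq hz1 (M + 1)
    have h2 : ∑ s ∈ Finset.range (M + 1), z ^ s = 1 + ∑ s ∈ Finset.Icc 1 M, z ^ s := by
      rw [h0, Finset.sum_insert (by simp)]; simp
    have h3 : ∑ s ∈ Finset.Icc 1 M, z ^ s = (z ^ (M + 1) - 1) / (z - 1) - 1 := by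
      rw [← h1, h2]; ring
    rw [h3]
    field_simp
    ring
  -- norm of z - 1
  have hz_eq : z - 1 = ((Real.cos θ - 1 : ℝ) : ℂ) + ((Real.sin θ : ℝ) : ℂ) * Complex.I := by
    rw [hzdef, Complex.exp_mul_I, ← Complex.ofReal_cos, ← Complex.ofReal_sin]
    push_cast
    ring
  have hx_pos : 0 < π * (k : ℝ) / n := by positivity
  have hx_lt : π * (k : ℝ) / n < π := by
    rw [div_lt_iff₀ hn0]; nlinarith
  have hs_pos : 0 < Real.sin (π * (k : ℝ) / n) := Real.sin_pos_of_pos_of_lt_pi hx_pos hx_lt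
  have hz1norm : ‖z - 1‖ = 2 * Real.sin (π * (k : ℝ) / n) := by
    rw [hz_eq, Complex.norm_add_mul_I]
    have h2' : Real.sin (θ / 2) ^ 2 = 1 / 2 - Real.cos θ / 2 := by
      have := Real.sin_sq_eq_half_sub (θ / 2)
      rwa [show 2 * (θ / 2) = θ by ring] at this
    have h1 := Real.sin_sq_add_cos_sq θ
    have hval : (Real.cos θ - 1) ^ 2 + Real.sin θ ^ 2 = (2 * Real.sin (θ / 2)) ^ 2 := by
      nlinarith
    rw [hval, Real.sqrt_sq_eq_abs]
    have hhalf : θ / 2 = -(π * (k : ℝ) / n) := by rw [hθ]; ring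
    rw [hhalf, Real.sin_neg, mul_neg, abs_neg, abs_mul, abs_two, abs_of_pos hs_pos]
  -- main calc
  have hnorm_sum : ‖∑ s ∈ Finset.Icc 1 M, z ^ s‖ ≤ 2 / ‖z - 1‖ := by
    rw [hsum, norm_div]
    have h2 : ‖z ^ (M + 1) - z‖ ≤ 2 := by
      calc ‖z ^ (M + 1) - z‖ ≤ ‖z ^ (M + 1)‖ + ‖z‖ := norm_sub_le _ _
      _ = 2 := by rw [norm_pow, hznorm]; norm_num
    gcongr
  -- sin lower bound
  have hnkR : (0:ℝ) < (n : ℝ) - k := by linarith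
  have hkey : 2 ≤ (n : ℝ) * Real.sin (π * k / n) * (1 / (k : ℝ) + 1 / ((n : ℝ) - k)) := by
    have e1 : (k : ℝ) * (1 / (k : ℝ)) = 1 := by field_simp
    have e2 : ((n : ℝ) - k) * (1 / ((n : ℝ) - k)) = 1 := by field_simp
    have hp1 : (0:ℝ) < 1 / (k : ℝ) := by positivity
    have hp2 : (0:ℝ) < 1 / ((n : ℝ) - k) := by positivity
    rcases le_or_gt (2 * k) n with h | h
    · have h' : 2 * (k : ℝ) ≤ n := by exact_mod_cast h
      have hx2 : π * (k : ℝ) / n ≤ π / 2 := by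
        rw [div_le_div_iff₀ hn0 two_pos]; nlinarith
      have := Real.mul_le_sin (le_of_lt hx_pos) hx2
      have hsin_ge : 2 * (k : ℝ) / n ≤ Real.sin (π * (k : ℝ) / n) := by
        have heq : 2 / π * (π * (k : ℝ) / n) = 2 * (k : ℝ) / n := by
          field_simp
        linarith [heq ▸ this]
      have hstep : (n:ℝ) * (2 * k / n) * (1 / (k:ℝ) + 1 / ((n:ℝ) - k))
          = 2 + 2 * k * (1 / ((n:ℝ) - k)) := by
        field_simp
      have hmono : (n:ℝ) * (2 * k / n) * (1 / (k:ℝ) + 1 / ((n:ℝ) - k))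
          ≤ (n:ℝ) * Real.sin (π * k / n) * (1 / (k:ℝ) + 1 / ((n:ℝ) - k)) := by
        gcongr
      nlinarith [mul_pos hk0 hp2]
    · have h' : (n : ℝ) < 2 * k := by exact_mod_cast h
      have heqs : Real.sin (π * (k : ℝ) / n) = Real.sin (π * ((n : ℝ) - k) / n) := by
        rw [← Real.sin_pi_sub]
        congr 1
        field_simp
      have hx1 : (0:ℝ) ≤ π * ((n : ℝ) - k) / n := by positivity
      have hx2 : π * ((n : ℝ) - k) / n ≤ π / 2 := by
        rw [div_le_div_iff₀ hn0 two_pos]; nlinarith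
      have := Real.mul_le_sin hx1 hx2
      have hsin_ge : 2 * ((n : ℝ) - k) / n ≤ Real.sin (π * (k : ℝ) / n) := by
        rw [heqs]
        have heq : 2 / π * (π * ((n : ℝ) - k) / n) = 2 * ((n : ℝ) - k) / n := by
          field_simp
        linarith [heq ▸ this]
      have hstep : (n:ℝ) * (2 * ((n:ℝ) - k) / n) * (1 / (k:ℝ) + 1 / ((n:ℝ) - k))
          = 2 + 2 * ((n:ℝ) - k) * (1 / (k:ℝ)) := by
        field_simp
        ring
      have hmono : (n:ℝ) * (2 * ((n:ℝ) - k) / n) * (1 / (k:ℝ) + 1 / ((n:ℝ) - k))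
          ≤ (n:ℝ) * Real.sin (π * k / n) * (1 / (k:ℝ) + 1 / ((n:ℝ) - k)) := by
        gcongr
      nlinarith [mul_pos hnkR hp1]
  -- assemble
  have hcoef : ‖((2 * π / n : ℝ) : ℂ)‖ = 2 * π / n := by
    rw [Complex.norm_real, Real.norm_eq_abs, abs_of_pos (by positivity)]
  calc ‖lagWeight n lam (k : ℤ)‖
      = (2 * π / n) * ‖∑ s ∈ Finset.Icc 1 M, z ^ s‖ := by
        unfold lagWeight
        rw [show ((2 : ℂ) * π / n) = ((2 * π / n : ℝ) : ℂ) by push_cast; ring,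
          norm_mul, hcoef]
        congr 2
        rw [← Finset.sum_filter, hfil]
        exact Finset.sum_congr rfl fun s _ => hterm s
    _ ≤ (2 * π / n) * (2 / ‖z - 1‖) := by
        apply mul_le_mul_of_nonneg_left hnorm_sum (by positivity)
    _ = 2 * π / ((n : ℝ) * Real.sin (π * k / n)) := by
        rw [hz1norm]
        field_simp
    _ ≤ π * (1 / (k : ℝ) + 1 / ((n : ℝ) - k)) := by
        rw [div_le_iff₀ (by positivity)]
        nlinarith [hkey, hπ]

lemma lagWeight_neg_norm (n : ℕ) (lam : ℝ) (k : ℤ) :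
    ‖lagWeight n lam (-k)‖ = ‖lagWeight n lam k‖ := by
  have h : lagWeight n lam (-k) = starRingEnd ℂ (lagWeight n lam k) := by
    unfold lagWeight
    rw [map_mul, map_sum]
    congr 1
    · simp [Complex.conj_ofReal, map_div₀, map_ofNat]
    · refine Finset.sum_congr rfl fun s _ => ?_
      rw [apply_ite (starRingEnd ℂ), map_zero, ← Complex.exp_conj]
      congr 1
      simp only [map_div₀, map_mul, map_neg, Complex.conj_I, Complex.conj_ofReal,
        map_ofNat, map_intCast, map_natCast]
      push_cast
      ring
  rw [h, starRingEnd_apply]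
  exact norm_star _

lemma lagWeight_zero_norm {n : ℕ} (hn : 2 ≤ n) (lam : ℝ) :
    ‖lagWeight n lam 0‖ ≤ 2 * π := by
  have hn0 : (0 : ℝ) < n := by positivity
  have hπ := Real.pi_pos
  unfold lagWeight
  rw [show ((2 : ℂ) * π / n) = ((2 * π / n : ℝ) : ℂ) by push_cast; ring, norm_mul,
    Complex.norm_real, Real.norm_eq_abs, abs_of_pos (by positivity)]
  have hbound : ‖∑ s ∈ Finset.Icc 1 (n-1),
      (if 2 * π * s / n ≤ lam then
        Complex.exp (-2 * π * Complex.I * ((0 : ℤ) : ℂ) * (s : ℂ) / (n : ℂ)) else 0)‖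
      ≤ (n - 1 : ℝ) := by
    refine (norm_sum_le _ _).trans ?_
    have : ∀ s ∈ Finset.Icc 1 (n-1), ‖(if 2 * π * (s:ℝ) / n ≤ lam then
        Complex.exp (-2 * π * Complex.I * ((0 : ℤ) : ℂ) * (s : ℂ) / (n : ℂ)) else 0)‖ ≤ 1 := by
      intro s _
      split
      · simp
      · simp
    refine (Finset.sum_le_sum this).trans ?_
    simp only [Finset.sum_const, Nat.card_Icc, nsmul_eq_mul, mul_one]
    have : (n - 1 + 1 - 1 : ℕ) = n - 1 := by omega
    rw [this]
    have : ((n - 1 : ℕ) : ℝ) ≤ (n : ℝ) - 1 := by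
      push_cast [Nat.cast_sub (by omega : 1 ≤ n)]
      linarith
    linarith
  calc 2 * π / n * ‖_‖ ≤ 2 * π / n * ((n:ℝ) - 1) := by
        apply mul_le_mul_of_nonneg_left hbound (by positivity)
    _ ≤ 2 * π := by
        rw [div_mul_eq_mul_div, div_le_iff₀ hn0]
        nlinarith


/-- there is a constant `K` such that for every `n ≥ 2` and `λ ∈ [0, π]`,
`∑_{k=-(n-1)}^{n-1} |w_{n,λ}(k)| ≤ K log n`. -/
theorem stmt5 : ∃ K : ℝ, ∀ n : ℕ, 2 ≤ n → ∀ lam ∈ Set.Icc (0 : ℝ) π,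
    ∑ k ∈ Finset.Icc (-((n : ℤ) - 1)) ((n : ℤ) - 1), ‖lagWeight n lam k‖ ≤
      K * Real.log n := by
  refine ⟨6 * π / Real.log 2 + 4 * π, ?_⟩
  intro n hn lam hlam
  obtain ⟨hl0, -⟩ := hlam
  have hπ := Real.pi_pos
  have hn0 : (0 : ℝ) < n := by positivity
  set N : ℕ := n - 1 with hN
  have hsplit : Finset.Icc (-((n:ℤ)-1)) ((n:ℤ)-1)
      = Finset.Icc (-((n:ℤ)-1)) (-1) ∪ Finset.Icc 0 ((n:ℤ)-1) := by
    ext a; simp only [Finset.mem_Icc, Finset.mem_union]; omega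
  have hdisj : Disjoint (Finset.Icc (-((n:ℤ)-1)) (-1)) (Finset.Icc 0 ((n:ℤ)-1)) := by
    rw [Finset.disjoint_left]
    intro a ha hb
    simp only [Finset.mem_Icc] at ha hb
    omega
  rw [hsplit, Finset.sum_union hdisj]
  have himg : Finset.Icc (-((n:ℤ)-1)) (-1)
      = (Finset.Icc (1:ℤ) ((n:ℤ)-1)).image (fun x => -x) := by
    ext a
    simp only [Finset.mem_Icc, Finset.mem_image]
    constructor
    · intro h; exact ⟨-a, by omega, by omega⟩
    · rintro ⟨b, hb, rfl⟩; omega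
  have hneg : ∑ k ∈ Finset.Icc (-((n:ℤ)-1)) (-1), ‖lagWeight n lam k‖
      = ∑ k ∈ Finset.Icc (1:ℤ) ((n:ℤ)-1), ‖lagWeight n lam k‖ := by
    rw [himg, Finset.sum_image (by intro x _ y _ h; have h' : -x = -y := h; omega)]
    exact Finset.sum_congr rfl fun k _ => lagWeight_neg_norm n lam k
  have h0ins : Finset.Icc (0:ℤ) ((n:ℤ)-1) = insert 0 (Finset.Icc 1 ((n:ℤ)-1)) := by
    ext a; simp only [Finset.mem_Icc, Finset.mem_insert]; omega
  rw [hneg, h0ins, Finset.sum_insert (by simp)]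
  have hZN : Finset.Icc (1:ℤ) ((n:ℤ)-1) = (Finset.Icc 1 N).image (fun m : ℕ => (m:ℤ)) := by
    ext a
    simp only [Finset.mem_Icc, Finset.mem_image]
    constructor
    · intro h; exact ⟨a.toNat, by omega, by omega⟩
    · rintro ⟨b, hb, rfl⟩; omega
  have hnat : ∑ k ∈ Finset.Icc (1:ℤ) ((n:ℤ)-1), ‖lagWeight n lam k‖
      = ∑ k ∈ Finset.Icc 1 N, ‖lagWeight n lam (k:ℤ)‖ := by
    rw [hZN, Finset.sum_image (by intro x _ y _ h; have h' : (x:ℤ) = y := h; exact_mod_cast h')]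
  rw [hnat]
  -- harmonic bound
  have hA : ∑ k ∈ Finset.Icc 1 N, (1/(k:ℝ)) ≤ 1 + Real.log n := by
    have h1 : ∑ k ∈ Finset.Icc 1 N, (1/(k:ℝ)) = ((harmonic N : ℚ) : ℝ) := by
      rw [harmonic_eq_sum_Icc]
      push_cast
      simp [one_div]
    rw [h1]
    refine (harmonic_le_one_add_log N).trans ?_
    have hN1 : (1:ℝ) ≤ N := by
      have : 1 ≤ N := by omega
      exact_mod_cast this
    have hNn : (N:ℝ) ≤ n := by
      have : N ≤ n := by omega
      exact_mod_cast this
    have := Real.log_le_log (by linarith) hNn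
    linarith
  have hB : ∑ k ∈ Finset.Icc 1 N, (1/((n:ℝ) - k)) = ∑ k ∈ Finset.Icc 1 N, (1/(k:ℝ)) := by
    have himg2 : (Finset.Icc 1 N).image (fun m => n - m) = Finset.Icc 1 N := by
      ext a
      simp only [Finset.mem_image, Finset.mem_Icc]
      constructor
      · rintro ⟨b, hb, rfl⟩; omega
      · intro h; exact ⟨n - a, by omega, by omega⟩
    calc ∑ k ∈ Finset.Icc 1 N, (1/((n:ℝ) - k))
        = ∑ k ∈ (Finset.Icc 1 N).image (fun m => n - m), (1/((n:ℝ) - k)) := by rw [himg2]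
      _ = ∑ k ∈ Finset.Icc 1 N, (1/((n:ℝ) - ((n - k : ℕ):ℝ))) := by
          refine Finset.sum_image ?_
          intro x hx y hy h
          simp only [Finset.coe_Icc, Set.mem_Icc, Finset.mem_Icc] at hx hy
          have h' : n - x = n - y := h
          omega
      _ = ∑ k ∈ Finset.Icc 1 N, (1/(k:ℝ)) := by
          refine Finset.sum_congr rfl fun k hk => ?_
          simp only [Finset.mem_Icc] at hk
          rw [Nat.cast_sub (by omega : k ≤ n)]
          norm_num
  have hterm : ∑ k ∈ Finset.Icc 1 N, ‖lagWeight n lam (k:ℤ)‖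
      ≤ 2 * π + 2 * π * Real.log n := by
    calc ∑ k ∈ Finset.Icc 1 N, ‖lagWeight n lam (k:ℤ)‖
        ≤ ∑ k ∈ Finset.Icc 1 N, π * (1/(k:ℝ) + 1/((n:ℝ) - k)) := by
          refine Finset.sum_le_sum fun k hk => ?_
          simp only [Finset.mem_Icc] at hk
          exact lagWeight_bound hn hk.1 hk.2 hl0
      _ = π * (∑ k ∈ Finset.Icc 1 N, (1/(k:ℝ)) + ∑ k ∈ Finset.Icc 1 N, (1/((n:ℝ) - k))) := by
          rw [← Finset.sum_add_distrib, Finset.mul_sum]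
      _ = π * (2 * ∑ k ∈ Finset.Icc 1 N, (1/(k:ℝ))) := by rw [hB]; ring
      _ ≤ 2 * π + 2 * π * Real.log n := by nlinarith [hA, hπ]
  have h0 := lagWeight_zero_norm hn lam
  have hlog2 : 0 < Real.log 2 := Real.log_pos (by norm_num)
  have hlogn : Real.log 2 ≤ Real.log n := Real.log_le_log (by norm_num) (by exact_mod_cast hn)
  have hlogn0 : 0 < Real.log n := lt_of_lt_of_le hlog2 hlogn
  have hkey : 6 * π ≤ 6 * π / Real.log 2 * Real.log n := by
    rw [div_mul_eq_mul_div, le_div_iff₀ hlog2]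
    nlinarith
  nlinarith [hterm, h0, hkey, hlogn0, hπ]
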